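/- arXiv:1912.00621 — 3 statements merged into one kernel-verified Lean document; each statement's English description precedes it below -/
import Mathlib

section
/- Let C be an essentially small extriangulated category and let X be a dense subcategory of C (i.e. add(X) = C). Then X is closed under Cone of inflations if and only if X is closed under CoCone of deflations. -/
open CategoryTheory CategoryTheory.Limits Opposite ZeroObject

attribute [local instance] CategoryTheory.Limits.hasBinaryBiproducts_of_finite_biproducts

universe w v u

noncomputable section

/-- An object of a preadditive category with finite biproducts is *indecomposable* if it is
nonzero and admits no nontrivial direct sum decomposition. -/
def Indec {C : Type u} [Category.{v} C] [Preadditive C] [HasFiniteBiproducts C] (X : C) : Prop :=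
  ¬ IsZero X ∧ ∀ (Y Z : C), Nonempty (X ≅ Y ⊞ Z) → IsZero Y ∨ IsZero Z

/-- A preadditive category is *Krull-Schmidt* if every object is (isomorphic to) a finite
biproduct of objects having local endomorphism rings. -/
def IsKrullSchmidt (C : Type u) [Category.{v} C] [Preadditive C] [HasFiniteBiproducts C] : Prop :=
  ∀ X : C, ∃ (n : ℕ) (f : Fin n → C),
    (∀ i, IsLocalRing (CategoryTheory.End (f i))) ∧ Nonempty (X ≅ ⨁ f)

/-- `C` is *locally finite*: for every indecomposable `A` there are, up to isomorphism, only
finitely many indecomposables `B` with `Hom(A, B) ≠ 0`, and only finitely many indecomposables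
`B` with `Hom(B, A) ≠ 0`. -/
def LocFinite (C : Type u) [Category.{v} C] [Preadditive C] [HasFiniteBiproducts C] : Prop :=
  ∀ A : C, Indec A →
    (∃ (n : ℕ) (ind : Fin n → C), ∀ B : C, Indec B → (∃ φ : A ⟶ B, φ ≠ 0) →
        ∃ i, Nonempty (B ≅ ind i)) ∧
    (∃ (n : ℕ) (ind : Fin n → C), ∀ B : C, Indec B → (∃ φ : B ⟶ A, φ ≠ 0) →
        ∃ i, Nonempty (B ≅ ind i))

/-- `X` is a *dense* subcategory: `add X = C`, i.e. every object of `C` is a direct summand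
of an object of `X`. -/
def DenseSub {C : Type u} [Category.{v} C] [Preadditive C] [HasFiniteBiproducts C]
    (X : Set C) : Prop :=
  ∀ A : C, ∃ X₀ ∈ X, ∃ B : C, Nonempty (X₀ ≅ A ⊞ B)

/-- `X` is a full additive subcategory closed under isomorphisms (given as a set of objects). -/
def AddSub (C : Type u) [Category.{v} C] [Preadditive C] [HasFiniteBiproducts C]
    (X : Set C) : Prop :=
  (0 : C) ∈ X ∧ (∀ {A B : C}, A ∈ X → B ∈ X → (A ⊞ B) ∈ X) ∧
    (∀ {A B : C}, A ∈ X → Nonempty (A ≅ B) → B ∈ X)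

section ExtCatDef

variable (C : Type u) [Category.{v} C] [Preadditive C] [HasFiniteBiproducts C]

/-- An extriangulated structure (in the sense of Nakaoka–Palu) on the additive category `C`:
a biadditive functor `E : Cᵒᵖ × C → Ab` together with an additive realization `real` of
extensions by conflations, satisfying (ET1)–(ET4) and their duals. -/
structure ExtCat where
  /-- the biadditive functor `E : Cᵒᵖ × C → Ab`. -/
  E : Cᵒᵖ ⥤ C ⥤ AddCommGrpCat.{v}
  additive₁ : E.Additive
  additive₂ : ∀ c : Cᵒᵖ, (E.obj c).Additive
  /-- `real x y δ` says that the sequence `x, y` realizes the extension `δ`, i.e.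
  `(x, y, δ)` is an `E`-triangle. -/
  real : ∀ {a b c : C}, (a ⟶ b) → (b ⟶ c) → ((E.obj (op c)).obj a) → Prop
  /-- every extension is realized by some conflation. -/
  real_exists : ∀ {a c : C} (δ : (E.obj (op c)).obj a),
    ∃ (b : C) (x : a ⟶ b) (y : b ⟶ c), real x y δ
  /-- the realization is well defined on equivalence classes of sequences. -/
  real_congr : ∀ {a b b' c : C} {x : a ⟶ b} {y : b ⟶ c} {x' : a ⟶ b'} {y' : b' ⟶ c}
    {δ : (E.obj (op c)).obj a} (e : b ≅ b'),
      x ≫ e.hom = x' → e.hom ≫ y' = y → real x y δ → real x' y' δ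
  /-- any two realizations of the same extension are equivalent sequences. -/
  real_unique : ∀ {a b b' c : C} {x : a ⟶ b} {y : b ⟶ c} {x' : a ⟶ b'} {y' : b' ⟶ c}
    {δ : (E.obj (op c)).obj a}, real x y δ → real x' y' δ →
      ∃ e : b ≅ b', x ≫ e.hom = x' ∧ e.hom ≫ y' = y
  /-- (ET2) realization of morphisms of extensions: if `f_* δ = g^* δ'` then `(f, g)` extends to
  a morphism of the realizing `E`-triangles. -/
  real_lift : ∀ {a b c a' b' c' : C} {x : a ⟶ b} {y : b ⟶ c} {x' : a' ⟶ b'} {y' : b' ⟶ c'}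
    {δ : (E.obj (op c)).obj a} {δ' : (E.obj (op c')).obj a'} (f : a ⟶ a') (g : c ⟶ c'),
      real x y δ → real x' y' δ' →
      ((E.obj (op c)).map f) δ = ((E.map g.op).app a') δ' →
      ∃ m : b ⟶ b', x ≫ m = f ≫ x' ∧ m ≫ y' = y ≫ g
  /-- the realization is additive, part (i): split extensions are realized by split sequences. -/
  real_zero : ∀ a c : C,
    real (biprod.inl : a ⟶ a ⊞ c) (biprod.snd : a ⊞ c ⟶ c) (0 : (E.obj (op c)).obj a)
  /-- the realization is additive, part (ii): it commutes with direct sums. -/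
  real_sum : ∀ {a b c a' b' c' : C} {x : a ⟶ b} {y : b ⟶ c} {x' : a' ⟶ b'} {y' : b' ⟶ c'}
    {δ : (E.obj (op c)).obj a} {δ' : (E.obj (op c')).obj a'},
      real x y δ → real x' y' δ' →
      real (biprod.map x x') (biprod.map y y')
        (((E.map (biprod.fst : c ⊞ c' ⟶ c).op).app (a ⊞ a'))
            (((E.obj (op c)).map (biprod.inl : a ⟶ a ⊞ a')) δ) +
         ((E.map (biprod.snd : c ⊞ c' ⟶ c').op).app (a ⊞ a'))
            (((E.obj (op c')).map (biprod.inr : a' ⟶ a ⊞ a')) δ'))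
  /-- (ET3). -/
  et3 : ∀ {a b c a' b' c' : C} {x : a ⟶ b} {y : b ⟶ c} {x' : a' ⟶ b'} {y' : b' ⟶ c'}
    {δ : (E.obj (op c)).obj a} {δ' : (E.obj (op c')).obj a'} (f : a ⟶ a') (m : b ⟶ b'),
      real x y δ → real x' y' δ' → x ≫ m = f ≫ x' →
      ∃ g : c ⟶ c', y ≫ g = m ≫ y' ∧ ((E.obj (op c)).map f) δ = ((E.map g.op).app a') δ'
  /-- (ET3)ᵒᵖ. -/
  et3op : ∀ {a b c a' b' c' : C} {x : a ⟶ b} {y : b ⟶ c} {x' : a' ⟶ b'} {y' : b' ⟶ c'}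
    {δ : (E.obj (op c)).obj a} {δ' : (E.obj (op c')).obj a'} (g : c ⟶ c') (m : b ⟶ b'),
      real x y δ → real x' y' δ' → m ≫ y' = y ≫ g →
      ∃ f : a ⟶ a', x ≫ m = f ≫ x' ∧ ((E.obj (op c)).map f) δ = ((E.map g.op).app a') δ'
  /-- (ET4). -/
  et4 : ∀ {A B D F G : C} {f : A ⟶ B} {f' : B ⟶ D} {g : B ⟶ G} {g' : G ⟶ F}
    {δ : (E.obj (op D)).obj A} {δ' : (E.obj (op F)).obj B},
      real f f' δ → real g g' δ' →
      ∃ (Eo : C) (d : D ⟶ Eo) (e : Eo ⟶ F) (h' : G ⟶ Eo) (δ'' : (E.obj (op Eo)).obj A),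
        real (f ≫ g) h' δ'' ∧ f' ≫ d = g ≫ h' ∧ h' ≫ e = g' ∧
        real d e (((E.obj (op F)).map f') δ') ∧
        ((E.map d.op).app A) δ'' = δ ∧
        ((E.obj (op Eo)).map f) δ'' = ((E.map e.op).app B) δ'
  /-- (ET4)ᵒᵖ. -/
  et4op : ∀ {A B D F Cc : C} {f' : D ⟶ A} {f : A ⟶ B} {g' : F ⟶ B} {g : B ⟶ Cc}
    {δ : (E.obj (op B)).obj D} {δ' : (E.obj (op Cc)).obj F},
      real f' f δ → real g' g δ' →
      ∃ (Eo : C) (d : D ⟶ Eo) (e : Eo ⟶ F) (h' : Eo ⟶ A) (δ'' : (E.obj (op Cc)).obj Eo),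
        real h' (f ≫ g) δ'' ∧ d ≫ h' = f' ∧ h' ≫ f = e ≫ g' ∧
        real d e (((E.map g'.op).app D) δ) ∧
        ((E.obj (op Cc)).map e) δ'' = δ' ∧
        ((E.obj (op B)).map d) δ = ((E.map g.op).app Eo) δ''

end ExtCatDef

namespace ExtCat

variable {C : Type u} [Category.{v} C] [Preadditive C] [HasFiniteBiproducts C]
variable (ξ : ExtCat C)

/-- The extension group `E(c, a)`. -/
abbrev Ext (c a : C) : Type v := (ξ.E.obj (op c)).obj a

/-- Pushforward `f_* : E(c, a) → E(c, a')` along `f : a ⟶ a'`. -/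
def push (c : C) {a a' : C} (f : a ⟶ a') (δ : ξ.Ext c a) : ξ.Ext c a' :=
  ((ξ.E.obj (op c)).map f) δ

/-- Pullback `g^* : E(c, a) → E(c', a)` along `g : c' ⟶ c`. -/
def pull (a : C) {c c' : C} (g : c' ⟶ c) (δ : ξ.Ext c a) : ξ.Ext c' a :=
  ((ξ.E.map g.op).app a) δ

/-- An object `P` is projective if `E(P, A) = 0` for all `A`. -/
def ProjObj (P : C) : Prop := ∀ (A : C) (δ : ξ.Ext P A), δ = 0

/-- An object `I` is injective if `E(A, I) = 0` for all `A`. -/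
def InjObj (I : C) : Prop := ∀ (A : C) (δ : ξ.Ext A I), δ = 0

end ExtCat

section SubcatDefs

variable {C : Type u} [Category.{v} C] [Preadditive C] [HasFiniteBiproducts C]

/-- `X` is closed under cones of inflations: for every `E`-triangle `A ⟶ B ⟶ C --δ-->` with
`A, B ∈ X` one has `C ∈ X`. -/
def ConeClosed (ξ : ExtCat C) (X : Set C) : Prop :=
  ∀ {A B Cc : C} (f : A ⟶ B) (g : B ⟶ Cc) (δ : ξ.Ext Cc A),
    ξ.real f g δ → A ∈ X → B ∈ X → Cc ∈ X

/-- `X` is closed under cocones of deflations: for every `E`-triangle `A ⟶ B ⟶ C --δ-->` with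
`B, C ∈ X` one has `A ∈ X`. -/
def CoconeClosed (ξ : ExtCat C) (X : Set C) : Prop :=
  ∀ {A B Cc : C} (f : A ⟶ B) (g : B ⟶ Cc) (δ : ξ.Ext Cc A),
    ξ.real f g δ → B ∈ X → Cc ∈ X → A ∈ X

/-- `X` is closed under extensions. -/
def ExtClosed (ξ : ExtCat C) (X : Set C) : Prop :=
  ∀ {A B Cc : C} (f : A ⟶ B) (g : B ⟶ Cc) (δ : ξ.Ext Cc A),
    ξ.real f g δ → A ∈ X → Cc ∈ X → B ∈ X

/-- `G` is a generator of `C`: every object `A` admits an `E`-triangle `A₁ ⟶ G₀ ⟶ A --δ-->`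
with `G₀ ∈ G`. -/
def IsGenerator (ξ : ExtCat C) (G : Set C) : Prop :=
  ∀ A : C, ∃ G₀ ∈ G, ∃ (A₁ : C) (f : A₁ ⟶ G₀) (g : G₀ ⟶ A) (δ : ξ.Ext A A₁), ξ.real f g δ

/-- `G` is a cogenerator of `C`: every object `A` admits an `E`-triangle
`A ⟶ G₀ ⟶ A₁ --θ-->` with `G₀ ∈ G`. -/
def IsCogenerator (ξ : ExtCat C) (G : Set C) : Prop :=
  ∀ A : C, ∃ G₀ ∈ G, ∃ (A₁ : C) (f : A ⟶ G₀) (g : G₀ ⟶ A₁) (δ : ξ.Ext A₁ A), ξ.real f g δ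

/-- `X` is a `G`-resolving subcategory. -/
def GResolving (ξ : ExtCat C) (G X : Set C) : Prop :=
  AddSub C X ∧ ExtClosed ξ X ∧ CoconeClosed ξ X ∧ G ⊆ X

/-- `X` is a `G`-coresolving subcategory. -/
def GCoresolving (ξ : ExtCat C) (G X : Set C) : Prop :=
  AddSub C X ∧ ExtClosed ξ X ∧ ConeClosed ξ X ∧ G ⊆ X

end SubcatDefs

theorem stmt12 (C : Type u) [Category.{v} C] [Preadditive C] [HasFiniteBiproducts C]
    [EssentiallySmall.{w} C] (ξ : ExtCat C) (X : Set C)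
    (hadd : AddSub C X) (hdense : DenseSub X) :
    ConeClosed ξ X ↔ CoconeClosed ξ X := by
  constructor
  · intro hcone A B Cc f g δ hreal hB hC
    obtain ⟨X₀, hX₀, A', ⟨e⟩⟩ := hdense A
    have hAA' : (A ⊞ A') ∈ X := hadd.2.2 hX₀ ⟨e⟩
    have hA'A : (A' ⊞ A) ∈ X := hadd.2.2 hAA' ⟨biprod.braiding A A'⟩
    have hsum := ξ.real_sum hreal (ξ.real_zero A' A)
    have hCA : (Cc ⊞ A) ∈ X := hcone _ _ _ hsum hAA' (hadd.2.1 hB hA'A)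
    exact hcone _ _ _ (ξ.real_zero Cc A) hC hCA
  · intro hcocone A B Cc f g δ hreal hA hB
    obtain ⟨X₀, hX₀, C', ⟨e⟩⟩ := hdense Cc
    have hCC' : (Cc ⊞ C') ∈ X := hadd.2.2 hX₀ ⟨e⟩
    have hsum := ξ.real_sum hreal (ξ.real_zero Cc C')
    have hACc : (A ⊞ Cc) ∈ X := hcocone _ _ _ hsum (hadd.2.1 hB hCC') hCC'
    exact hcocone _ _ _ (ξ.real_zero Cc A)
      (hadd.2.2 hACc ⟨biprod.braiding A Cc⟩) hA
end
end

section
/- Let C be an essentially small extriangulated category with a generator G, and let X be a dense G-resolving subcategory of C. Then for any A ∈ C, one has A ∈ X if and only if [A] ∈ ⟨[X] | X ∈ X⟩, where ⟨[X] | X ∈ X⟩ is the subgroup of K_0(C) generated by the elements [X] with X ∈ X. -/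
open CategoryTheory CategoryTheory.Limits Opposite ZeroObject

attribute [local instance] CategoryTheory.Limits.hasBinaryBiproducts_of_finite_biproducts

universe w v u

noncomputable section

section K0Defs

variable (C : Type u) [Category.{v} C] [Preadditive C] [HasFiniteBiproducts C]

/-- The relations `[A] + [B] - [A ⊞ B]` and `[A] - [B]` for `A ≅ B`, defining `K₀(C, 0)`. -/
def relAdd : Set (FreeAbelianGroup C) :=
  {x | (∃ A B : C,
          x = FreeAbelianGroup.of A + FreeAbelianGroup.of B - FreeAbelianGroup.of (A ⊞ B)) ∨
       (∃ A B : C, Nonempty (A ≅ B) ∧ x = FreeAbelianGroup.of A - FreeAbelianGroup.of B)}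

/-- `K₀(C, 0)`: the free abelian group on the isomorphism classes of objects of `C`. -/
abbrev K0Zero := FreeAbelianGroup C ⧸ AddSubgroup.closure (relAdd C)

/-- The class `[A]` of an object `A` in `K₀(C, 0)`. -/
def clsZero (A : C) : K0Zero C := QuotientAddGroup.mk (FreeAbelianGroup.of A)

/-- The set of elements `[δ] = [A] + [C] - [B]` of `K₀(C, 0)` for all `E`-triangles
`A ⟶ B ⟶ C --δ-->`. -/
def conflRel (ξ : ExtCat C) : Set (K0Zero C) :=
  {x | ∃ (A B Cc : C) (f : A ⟶ B) (g : B ⟶ Cc) (δ : ξ.Ext Cc A),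
        ξ.real f g δ ∧ x = clsZero C A + clsZero C Cc - clsZero C B}

/-- The Grothendieck group `K₀(C)` of the extriangulated category. -/
abbrev K0Ext (ξ : ExtCat C) := K0Zero C ⧸ AddSubgroup.closure (conflRel C ξ)

/-- The canonical epimorphism `ψ : K₀(C, 0) → K₀(C)`. -/
def psiExt (ξ : ExtCat C) : K0Zero C →+ K0Ext C ξ := QuotientAddGroup.mk' _

/-- The class `[A]` of an object `A` in `K₀(C)`. -/
def k0clsE (ξ : ExtCat C) (A : C) : K0Ext C ξ := psiExt C ξ (clsZero C A)

end K0Defs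

section Stmt13Aux

namespace Stmt13Aux

variable {C : Type u} [Category.{v} C] [Preadditive C] [HasFiniteBiproducts C]

/-- The interchange isomorphism for biproducts. -/
def interchange (P Q R S : C) : (P ⊞ Q) ⊞ (R ⊞ S) ≅ (P ⊞ R) ⊞ (Q ⊞ S) :=
  biprod.associator P Q (R ⊞ S) ≪≫
    biprod.mapIso (Iso.refl P)
      ((biprod.associator Q R S).symm ≪≫
        biprod.mapIso (biprod.braiding Q R) (Iso.refl S) ≪≫ biprod.associator R Q S) ≪≫
    (biprod.associator P R (Q ⊞ S)).symm

/-- `A ⊞ 0 ≅ A`. -/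
def bz (A : C) : A ⊞ (0 : C) ≅ A := (isoBiprodZero (isZero_zero C)).symm

/-- `0 ⊞ A ≅ A`. -/
def zb (A : C) : (0 : C) ⊞ A ≅ A := (isoZeroBiprod (isZero_zero C)).symm

variable (X : Set C)

/-- Stable equality with respect to padding by objects of `X`. -/
def pR (A B : C) : Prop := ∃ U ∈ X, ∃ V ∈ X, Nonempty ((A ⊞ U) ≅ (B ⊞ V))

variable {X}

theorem pR_of_iso (hX : AddSub C X) {A B : C} (e : A ≅ B) : pR X A B :=
  ⟨0, hX.1, 0, hX.1, ⟨biprod.mapIso e (Iso.refl _)⟩⟩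

theorem pR_refl (hX : AddSub C X) (A : C) : pR X A A := pR_of_iso hX (Iso.refl A)

theorem pR_symm {A B : C} : pR X A B → pR X B A :=
  fun ⟨U, hU, V, hV, ⟨e⟩⟩ => ⟨V, hV, U, hU, ⟨e.symm⟩⟩

theorem pR_trans (hX : AddSub C X) {A B Cc : C} : pR X A B → pR X B Cc → pR X A Cc := by
  rintro ⟨U₁, hU₁, V₁, hV₁, ⟨e₁⟩⟩ ⟨U₂, hU₂, V₂, hV₂, ⟨e₂⟩⟩
  refine ⟨U₁ ⊞ U₂, hX.2.1 hU₁ hU₂, V₂ ⊞ V₁, hX.2.1 hV₂ hV₁, ⟨?_⟩⟩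
  exact (biprod.associator A U₁ U₂).symm ≪≫ biprod.mapIso e₁ (Iso.refl U₂) ≪≫
    biprod.associator B V₁ U₂ ≪≫ biprod.mapIso (Iso.refl B) (biprod.braiding V₁ U₂) ≪≫
    (biprod.associator B U₂ V₁).symm ≪≫ biprod.mapIso e₂ (Iso.refl V₁) ≪≫
    biprod.associator Cc V₂ V₁

variable (X) in
/-- The setoid of stable equality. -/
def pSetoid (hX : AddSub C X) : Setoid C := ⟨pR X, fun A => pR_refl hX A, pR_symm, pR_trans hX⟩

/-- The quotient of the objects of `C` by stable equality. -/
def Qt (hX : AddSub C X) := Quotient (pSetoid X hX)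

variable (hX : AddSub C X)

/-- The class of an object in `Qt`. -/
def qmk (A : C) : Qt hX := Quotient.mk (pSetoid X hX) A

theorem qmk_eq_of_pR {A B : C} (h : pR X A B) : qmk hX A = qmk hX B := Quotient.sound h

theorem pR_of_qmk_eq {A B : C} (h : qmk hX A = qmk hX B) : pR X A B := Quotient.exact h

/-- Addition on `Qt` induced by biproducts. -/
def qadd : Qt hX → Qt hX → Qt hX :=
  Quotient.lift₂ (fun A B => qmk hX (A ⊞ B)) (by
    rintro a₁ b₁ a₂ b₂ ⟨U₁, hU₁, V₁, hV₁, ⟨e₁⟩⟩ ⟨U₂, hU₂, V₂, hV₂, ⟨e₂⟩⟩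
    refine qmk_eq_of_pR hX ⟨U₁ ⊞ U₂, hX.2.1 hU₁ hU₂, V₁ ⊞ V₂, hX.2.1 hV₁ hV₂, ⟨?_⟩⟩
    exact interchange a₁ b₁ U₁ U₂ ≪≫ biprod.mapIso e₁ e₂ ≪≫ (interchange a₂ b₂ V₁ V₂).symm)

theorem negEx (hdense : DenseSub X) : ∀ a : Qt hX, ∃ b : Qt hX, qadd hX b a = qmk hX 0 := by
  intro a
  induction a using Quotient.ind with
  | _ A =>
    obtain ⟨X₀, hX₀, B, ⟨e⟩⟩ := hdense A
    refine ⟨qmk hX B, qmk_eq_of_pR hX ⟨0, hX.1, X₀, hX₀, ⟨?_⟩⟩⟩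
    exact bz (B ⊞ A) ≪≫ biprod.braiding B A ≪≫ e.symm ≪≫ isoZeroBiprod (isZero_zero C)

/-- The group structure on `Qt`. -/
def qtGroup (hdense : DenseSub X) : AddCommGroup (Qt hX) :=
  letI : Zero (Qt hX) := ⟨qmk hX 0⟩
  letI : Add (Qt hX) := ⟨qadd hX⟩
  letI : Neg (Qt hX) := ⟨fun a => Classical.choose (negEx hX hdense a)⟩
  { add := qadd hX
    zero := qmk hX 0
    neg := fun a => Classical.choose (negEx hX hdense a)
    sub := fun a b => qadd hX a (Classical.choose (negEx hX hdense b))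
    nsmul := nsmulRec
    zsmul := zsmulRec
    nsmul_zero := fun _ => rfl
    nsmul_succ := fun _ _ => rfl
    zsmul_zero' := fun _ => rfl
    zsmul_succ' := fun _ _ => rfl
    zsmul_neg' := fun _ _ => rfl
    sub_eq_add_neg := fun _ _ => rfl
    neg_add_cancel := fun a => Classical.choose_spec (negEx hX hdense a)
    add_assoc := by
      rintro ⟨a⟩ ⟨b⟩ ⟨c⟩
      exact qmk_eq_of_pR hX (pR_of_iso hX (biprod.associator a b c))
    zero_add := by rintro ⟨a⟩; exact qmk_eq_of_pR hX (pR_of_iso hX (zb a))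
    add_zero := by rintro ⟨a⟩; exact qmk_eq_of_pR hX (pR_of_iso hX (bz a))
    add_comm := by rintro ⟨a⟩ ⟨b⟩; exact qmk_eq_of_pR hX (pR_of_iso hX (biprod.braiding a b)) }

variable (C) in
/-- Lifts of the conflation relators to the free abelian group. -/
def conflSet (ξ : ExtCat C) : Set (FreeAbelianGroup C) :=
  {y | ∃ (A B Cc : C) (f : A ⟶ B) (g : B ⟶ Cc) (δ : ξ.Ext Cc A), ξ.real f g δ ∧
      y = FreeAbelianGroup.of A + FreeAbelianGroup.of Cc - FreeAbelianGroup.of B}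

theorem main_aux (hX : AddSub C X) (hdense : DenseSub X) (ξ : ExtCat C)
    (hext : ExtClosed ξ X) (hcoc : CoconeClosed ξ X) {A : C}
    (h : FreeAbelianGroup.of A ∈ AddSubgroup.closure
      (FreeAbelianGroup.of '' X ∪ (relAdd C ∪ conflSet C ξ))) : A ∈ X := by
  letI : AddCommGroup (Qt hX) := qtGroup hX hdense
  have hadd : ∀ B B' : C, qmk hX B + qmk hX B' = qmk hX (B ⊞ B') := fun _ _ => rfl
  have hzero : (0 : Qt hX) = qmk hX 0 := rfl
  have hqiso : ∀ {B B' : C}, (B ≅ B') → qmk hX B = qmk hX B' := fun e =>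
    qmk_eq_of_pR hX (pR_of_iso hX e)
  have hqmem : ∀ {B : C}, B ∈ X → qmk hX B = 0 := by
    intro B hB
    refine (qmk_eq_of_pR hX ⟨0, hX.1, B, hB, ⟨?_⟩⟩).trans hzero.symm
    exact bz B ≪≫ isoZeroBiprod (isZero_zero C)
  -- additivity on conflations
  have hconfl : ∀ {A₀ B₀ C₀ : C} (f : A₀ ⟶ B₀) (g : B₀ ⟶ C₀) (δ : ξ.Ext C₀ A₀),
      ξ.real f g δ → qmk hX A₀ + qmk hX C₀ = qmk hX B₀ := by
    intro A₀ B₀ C₀ f g δ hreal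
    obtain ⟨XA, hXA, A', ⟨eA⟩⟩ := hdense A₀
    have hA : (A₀ ⊞ A') ∈ X := hX.2.2 hXA ⟨eA⟩
    obtain ⟨XC, hXC, C', ⟨eC⟩⟩ := hdense C₀
    have hC : (C₀ ⊞ C') ∈ X := hX.2.2 hXC ⟨eC⟩
    have t1 := ξ.real_sum hreal (ξ.real_zero A' 0)
    have t2 := ξ.real_sum t1 (ξ.real_zero 0 C')
    have hM : ((B₀ ⊞ (A' ⊞ (0 : C))) ⊞ ((0 : C) ⊞ C')) ∈ X := by
      refine hext _ _ _ t2 ?_ ?_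
      · exact hX.2.2 hA ⟨(bz (A₀ ⊞ A')).symm⟩
      · exact hX.2.2 hC ⟨biprod.mapIso (bz C₀).symm (Iso.refl C')⟩
    have hq1 : qmk hX B₀ + (qmk hX A' + qmk hX C') = 0 := by
      rw [hadd, hadd]
      refine (hqiso ?_).trans (hqmem hM)
      exact (biprod.associator B₀ A' C').symm ≪≫
        biprod.mapIso (biprod.mapIso (Iso.refl B₀) (bz A').symm) (zb C').symm
    have hq2 : (qmk hX A₀ + qmk hX C₀) + (qmk hX A' + qmk hX C') = 0 := by
      rw [hadd, hadd, hadd]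
      refine (hqiso (interchange A₀ C₀ A' C')).trans (hqmem (hX.2.1 hA hC))
    have key : qmk hX A₀ + qmk hX C₀ - qmk hX B₀ =
        ((qmk hX A₀ + qmk hX C₀) + (qmk hX A' + qmk hX C')) -
          (qmk hX B₀ + (qmk hX A' + qmk hX C')) := by abel
    rw [hq1, hq2, sub_zero] at key
    exact sub_eq_zero.mp key
  -- the homomorphism to `Qt`
  let χ : FreeAbelianGroup C →+ Qt hX := FreeAbelianGroup.lift (fun B => qmk hX B)
  have hχof : ∀ B : C, χ (FreeAbelianGroup.of B) = qmk hX B := fun B =>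
    FreeAbelianGroup.lift_apply_of _ _
  have hker : AddSubgroup.closure
      (FreeAbelianGroup.of '' X ∪ (relAdd C ∪ conflSet C ξ)) ≤ χ.ker := by
    rw [AddSubgroup.closure_le]
    rintro x (⟨B, hB, rfl⟩ | (hrel | ⟨A₀, B₀, C₀, f, g, δ, hreal, rfl⟩))
    · simp only [SetLike.mem_coe, AddMonoidHom.mem_ker, hχof]
      exact hqmem hB
    · rcases hrel with ⟨B, B', rfl⟩ | ⟨B, B', ⟨e⟩, rfl⟩
      · simp only [SetLike.mem_coe, AddMonoidHom.mem_ker, map_sub, map_add, hχof]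
        rw [hadd, sub_self]
      · simp only [SetLike.mem_coe, AddMonoidHom.mem_ker, map_sub, hχof]
        rw [hqiso e, sub_self]
    · simp only [SetLike.mem_coe, AddMonoidHom.mem_ker, map_sub, map_add, hχof]
      rw [hconfl f g δ hreal, sub_self]
  have hA0 : qmk hX A = qmk hX 0 := by
    have := hker h
    rw [AddMonoidHom.mem_ker, hχof] at this
    exact this.trans hzero
  obtain ⟨U, hU, V, hV, ⟨e⟩⟩ := pR_of_qmk_eq hX hA0
  have hAU : (A ⊞ U) ∈ X :=
    hX.2.2 hV ⟨(isoZeroBiprod (isZero_zero C) ≪≫ e.symm : V ≅ A ⊞ U)⟩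
  exact hcoc biprod.inl biprod.snd 0 (ξ.real_zero A U) hAU hU

end Stmt13Aux

end Stmt13Aux

theorem stmt13 (C : Type u) [Category.{v} C] [Preadditive C] [HasFiniteBiproducts C]
    [EssentiallySmall.{w} C] (ξ : ExtCat C) (G : Set C) (hG : IsGenerator ξ G)
    (X : Set C) (hdense : DenseSub X) (hres : GResolving ξ G X) (A : C) :
    A ∈ X ↔ k0clsE C ξ A ∈ AddSubgroup.closure (k0clsE C ξ '' X) := by
  classical
  constructor
  · intro hA
    exact AddSubgroup.subset_closure ⟨A, hA, rfl⟩
  · intro h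
    obtain ⟨hX, hext, hcoc, -⟩ := hres
    set m1 : FreeAbelianGroup C →+ K0Zero C :=
      QuotientAddGroup.mk' (AddSubgroup.closure (relAdd C)) with hm1
    set π : FreeAbelianGroup C →+ K0Ext C ξ := (psiExt C ξ).comp m1 with hπ
    have hkA : ∀ B : C, k0clsE C ξ B = π (FreeAbelianGroup.of B) := fun _ => rfl
    have himg : k0clsE C ξ '' X = π '' (FreeAbelianGroup.of '' X) := by
      rw [Set.image_image]
      rfl
    rw [hkA, himg, ← AddMonoidHom.map_closure] at h
    have h2 : FreeAbelianGroup.of A ∈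
        AddSubgroup.closure (FreeAbelianGroup.of '' X) ⊔ π.ker := by
      rw [← AddSubgroup.comap_map_eq]
      exact h
    have hkerπ : π.ker ≤ AddSubgroup.closure (relAdd C ∪ Stmt13Aux.conflSet C ξ) := by
      intro x hx
      have hx1 : m1 x ∈ (psiExt C ξ).ker := by
        rw [AddMonoidHom.mem_ker]
        exact hx
      have hkψ : (psiExt C ξ).ker = AddSubgroup.closure (conflRel C ξ) :=
        QuotientAddGroup.ker_mk' _
      rw [hkψ] at hx1
      have hcr : conflRel C ξ = m1 '' Stmt13Aux.conflSet C ξ := by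
        ext y
        constructor
        · rintro ⟨A₀, B₀, C₀, f, g, δ, hr, rfl⟩
          refine ⟨_, ⟨A₀, B₀, C₀, f, g, δ, hr, rfl⟩, ?_⟩
          simp only [map_sub, map_add]
          rfl
        · rintro ⟨y₀, ⟨A₀, B₀, C₀, f, g, δ, hr, rfl⟩, rfl⟩
          refine ⟨A₀, B₀, C₀, f, g, δ, hr, ?_⟩
          simp only [map_sub, map_add]
          rfl
      rw [hcr, ← AddMonoidHom.map_closure] at hx1
      have hx2 : x ∈ AddSubgroup.closure (Stmt13Aux.conflSet C ξ) ⊔ m1.ker := by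
        rw [← AddSubgroup.comap_map_eq]
        exact hx1
      have hm1ker : m1.ker = AddSubgroup.closure (relAdd C) := QuotientAddGroup.ker_mk' _
      rw [hm1ker] at hx2
      have : AddSubgroup.closure (Stmt13Aux.conflSet C ξ) ⊔ AddSubgroup.closure (relAdd C) ≤
          AddSubgroup.closure (relAdd C ∪ Stmt13Aux.conflSet C ξ) := by
        rw [← AddSubgroup.closure_union, Set.union_comm]
      exact this hx2
    have hbig : FreeAbelianGroup.of A ∈ AddSubgroup.closure
        (FreeAbelianGroup.of '' X ∪ (relAdd C ∪ Stmt13Aux.conflSet C ξ)) := by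
      rw [AddSubgroup.closure_union]
      exact (sup_le_sup (le_refl _) hkerπ) h2
    exact Stmt13Aux.main_aux hX hdense ξ hext hcoc hbig
end
end

section
/- Let C be an essentially small extriangulated category with a generator (respectively cogenerator) G. Then there are one-to-one correspondences between the following three sets: (1) dense G-resolving subcategories of C; (2) dense G-coresolving subcategories of C; (3) subgroups of K_0(C) containing the image of G. The correspondence between (1) and (3) sends a dense G-resolving subcategory X to the subgroup ⟨[X] | X ∈ X⟩, with inverse sending a subgroup H to {A ∈ C | [A] ∈ H}. -/
open CategoryTheory CategoryTheory.Limits Opposite ZeroObject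

attribute [local instance] CategoryTheory.Limits.hasBinaryBiproducts_of_finite_biproducts

universe w v u

noncomputable section

section AuxProof

variable {C : Type u} [Category.{v} C] [Preadditive C] [HasFiniteBiproducts C]

/-- The associativity isomorphism for binary biproducts. -/
def bAssoc (A B D : C) : (A ⊞ B) ⊞ D ≅ A ⊞ (B ⊞ D) where
  hom := biprod.lift (biprod.fst ≫ biprod.fst) (biprod.lift (biprod.fst ≫ biprod.snd) biprod.snd)
  inv := biprod.lift (biprod.lift biprod.fst (biprod.snd ≫ biprod.fst)) (biprod.snd ≫ biprod.snd)
  hom_inv_id := by ext <;> simp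
  inv_hom_id := by ext <;> simp

/-- `A ⊞ 0 ≅ A`. -/
def bZero (A : C) : A ⊞ (0 : C) ≅ A := (isoBiprodZero (isZero_zero C)).symm

/-- `0 ⊞ A ≅ A`. -/
def zeroB (A : C) : (0 : C) ⊞ A ≅ A := (isoZeroBiprod (isZero_zero C)).symm

/-- The middle-four exchange isomorphism. -/
def shuffle4 (A B D E : C) : (A ⊞ B) ⊞ (D ⊞ E) ≅ (A ⊞ D) ⊞ (B ⊞ E) :=
  bAssoc A B (D ⊞ E) ≪≫
    biprod.mapIso (Iso.refl A)
      ((bAssoc B D E).symm ≪≫ biprod.mapIso (biprod.braiding B D) (Iso.refl E) ≪≫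
        bAssoc D B E) ≪≫ (bAssoc A D (B ⊞ E)).symm

/-- Thomason's stable-isomorphism relation attached to a full subcategory `X`. -/
def rX (X : Set C) (A B : C) : Prop :=
  ∃ P ∈ X, ∃ Q ∈ X, Nonempty (A ⊞ P ≅ B ⊞ Q)

variable {X : Set C}

lemma rX_refl (hAdd : AddSub C X) (A : C) : rX X A A :=
  ⟨0, hAdd.1, 0, hAdd.1, ⟨Iso.refl _⟩⟩

lemma rX_of_iso (hAdd : AddSub C X) {A B : C} (e : Nonempty (A ≅ B)) : rX X A B :=
  ⟨0, hAdd.1, 0, hAdd.1, ⟨biprod.mapIso e.some (Iso.refl 0)⟩⟩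

lemma rX_symm {A B : C} : rX X A B → rX X B A := by
  rintro ⟨P, hP, Q, hQ, ⟨e⟩⟩; exact ⟨Q, hQ, P, hP, ⟨e.symm⟩⟩

lemma rX_trans (hAdd : AddSub C X) {A B D : C} : rX X A B → rX X B D → rX X A D := by
  rintro ⟨P, hP, Q, hQ, ⟨e₁⟩⟩ ⟨R, hR, S, hS, ⟨e₂⟩⟩
  refine ⟨P ⊞ R, hAdd.2.1 hP hR, S ⊞ Q, hAdd.2.1 hS hQ, ⟨?_⟩⟩
  calc A ⊞ (P ⊞ R) ≅ (A ⊞ P) ⊞ R := (bAssoc _ _ _).symm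
    _ ≅ (B ⊞ Q) ⊞ R := biprod.mapIso e₁ (Iso.refl R)
    _ ≅ B ⊞ (Q ⊞ R) := bAssoc _ _ _
    _ ≅ B ⊞ (R ⊞ Q) := biprod.mapIso (Iso.refl B) (biprod.braiding Q R)
    _ ≅ (B ⊞ R) ⊞ Q := (bAssoc _ _ _).symm
    _ ≅ (D ⊞ S) ⊞ Q := biprod.mapIso e₂ (Iso.refl Q)
    _ ≅ D ⊞ (S ⊞ Q) := bAssoc _ _ _

lemma rX_equivalence (hAdd : AddSub C X) : Equivalence (rX X) :=
  ⟨rX_refl hAdd, rX_symm, rX_trans hAdd⟩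

lemma rX_congr (hAdd : AddSub C X) {A A' B B' : C} (h₁ : rX X A A') (h₂ : rX X B B') :
    rX X (A ⊞ B) (A' ⊞ B') := by
  obtain ⟨P, hP, Q, hQ, ⟨e₁⟩⟩ := h₁
  obtain ⟨R, hR, S, hS, ⟨e₂⟩⟩ := h₂
  refine ⟨P ⊞ R, hAdd.2.1 hP hR, Q ⊞ S, hAdd.2.1 hQ hS, ⟨?_⟩⟩
  calc (A ⊞ B) ⊞ (P ⊞ R) ≅ (A ⊞ P) ⊞ (B ⊞ R) := shuffle4 _ _ _ _
    _ ≅ (A' ⊞ Q) ⊞ (B' ⊞ S) := biprod.mapIso e₁ e₂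
    _ ≅ (A' ⊞ B') ⊞ (Q ⊞ S) := shuffle4 _ _ _ _

lemma rX_zero_of_mem (hAdd : AddSub C X) {A : C} (hA : A ∈ X) : rX X A 0 :=
  ⟨0, hAdd.1, A, hA, ⟨bZero A ≪≫ (zeroB A).symm⟩⟩

/-- The quotient of the objects of `C` by the relation `rX X`. -/
abbrev MQ (X : Set C) : Type u := Quot (rX X)

/-- A chosen "complement" of `A`: an object such that `A ⊞ complObj hD A ∈ X`. -/
noncomputable def complObj (hD : DenseSub X) (A : C) : C :=
  ((hD A).choose_spec.2).choose

lemma compl_mem (hAdd : AddSub C X) (hD : DenseSub X) (A : C) :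
    (A ⊞ complObj hD A) ∈ X :=
  hAdd.2.2 (hD A).choose_spec.1 ((hD A).choose_spec.2).choose_spec

lemma rX_compl_congr (hAdd : AddSub C X) (hD : DenseSub X) {A B : C} (h : rX X A B) :
    rX X (complObj hD A) (complObj hD B) := by
  obtain ⟨P, hP, Q, hQ, ⟨e⟩⟩ := h
  refine ⟨(B ⊞ complObj hD B) ⊞ Q, hAdd.2.1 (compl_mem hAdd hD B) hQ,
    (A ⊞ complObj hD A) ⊞ P, hAdd.2.1 (compl_mem hAdd hD A) hP, ⟨?_⟩⟩
  calc complObj hD A ⊞ ((B ⊞ complObj hD B) ⊞ Q)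
      ≅ complObj hD A ⊞ ((complObj hD B ⊞ B) ⊞ Q) :=
        biprod.mapIso (Iso.refl _) (biprod.mapIso (biprod.braiding _ _) (Iso.refl _))
    _ ≅ complObj hD A ⊞ (complObj hD B ⊞ (B ⊞ Q)) :=
        biprod.mapIso (Iso.refl _) (bAssoc _ _ _)
    _ ≅ complObj hD A ⊞ (complObj hD B ⊞ (A ⊞ P)) :=
        biprod.mapIso (Iso.refl _) (biprod.mapIso (Iso.refl _) e.symm)
    _ ≅ (complObj hD A ⊞ complObj hD B) ⊞ (A ⊞ P) := (bAssoc _ _ _).symm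
    _ ≅ (complObj hD B ⊞ complObj hD A) ⊞ (A ⊞ P) :=
        biprod.mapIso (biprod.braiding _ _) (Iso.refl _)
    _ ≅ complObj hD B ⊞ (complObj hD A ⊞ (A ⊞ P)) := bAssoc _ _ _
    _ ≅ complObj hD B ⊞ ((complObj hD A ⊞ A) ⊞ P) :=
        biprod.mapIso (Iso.refl _) (bAssoc _ _ _).symm
    _ ≅ complObj hD B ⊞ ((A ⊞ complObj hD A) ⊞ P) :=
        biprod.mapIso (Iso.refl _) (biprod.mapIso (biprod.braiding _ _) (Iso.refl _))

/-- The addition on `MQ X`. -/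
def MQadd (hAdd : AddSub C X) : Add (MQ X) :=
  ⟨Quot.lift₂ (fun A B => Quot.mk _ (A ⊞ B))
    (fun A _ _ h => Quot.sound (rX_congr hAdd (rX_refl hAdd A) h))
    (fun _ _ B h => Quot.sound (rX_congr hAdd h (rX_refl hAdd B)))⟩

/-- The abelian group structure on `MQ X`. -/
noncomputable def MQgroup (hAdd : AddSub C X) (hD : DenseSub X) : AddCommGroup (MQ X) := by
  letI : Zero (MQ X) := ⟨Quot.mk _ 0⟩
  letI : Add (MQ X) := MQadd hAdd
  letI : Neg (MQ X) := ⟨Quot.lift (fun A => Quot.mk _ (complObj hD A))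
    (fun _ _ h => Quot.sound (rX_compl_congr hAdd hD h))⟩
  letI grp : AddGroup (MQ X) := AddGroup.ofLeftAxioms
    (by rintro ⟨a⟩ ⟨b⟩ ⟨c⟩; exact Quot.sound (rX_of_iso hAdd ⟨bAssoc a b c⟩))
    (by rintro ⟨a⟩; exact Quot.sound (rX_of_iso hAdd ⟨zeroB a⟩))
    (by rintro ⟨a⟩
        rw [show (-(Quot.mk (rX X) a : MQ X)) = Quot.mk (rX X) (complObj hD a) from rfl]
        rw [show ((Quot.mk (rX X) (complObj hD a) : MQ X) + Quot.mk (rX X) a) =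
          Quot.mk (rX X) (complObj hD a ⊞ a) from rfl]
        rw [show ((0 : MQ X)) = Quot.mk (rX X) 0 from rfl]
        exact Quot.sound
          (rX_trans hAdd (rX_of_iso hAdd ⟨biprod.braiding _ _⟩)
            (rX_zero_of_mem hAdd (compl_mem hAdd hD a))))
  exact { grp with
    add_comm := by rintro ⟨a⟩ ⟨b⟩; exact Quot.sound (rX_of_iso hAdd ⟨biprod.braiding a b⟩) }

lemma clsZero_add (A B : C) : clsZero C (A ⊞ B) = clsZero C A + clsZero C B := by
  have : clsZero C A + clsZero C B - clsZero C (A ⊞ B) = 0 := by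
    show (QuotientAddGroup.mk (FreeAbelianGroup.of A) : K0Zero C) + QuotientAddGroup.mk _ -
      QuotientAddGroup.mk _ = 0
    rw [← QuotientAddGroup.mk_add, ← QuotientAddGroup.mk_sub]
    exact (QuotientAddGroup.eq_zero_iff _).mpr
      (AddSubgroup.subset_closure (Or.inl ⟨A, B, rfl⟩))
  exact (sub_eq_zero.mp this).symm

lemma clsZero_iso {A B : C} (e : Nonempty (A ≅ B)) : clsZero C A = clsZero C B := by
  rw [← sub_eq_zero]
  show (QuotientAddGroup.mk (FreeAbelianGroup.of A) : K0Zero C) - QuotientAddGroup.mk _ = 0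
  rw [← QuotientAddGroup.mk_sub]
  exact (QuotientAddGroup.eq_zero_iff _).mpr
    (AddSubgroup.subset_closure (Or.inr ⟨A, B, e, rfl⟩))

lemma clsZero_zero : clsZero C (0 : C) = 0 := by
  have h := clsZero_add (0 : C) (0 : C)
  rw [clsZero_iso ⟨bZero (0 : C)⟩] at h
  exact right_eq_add.mp h

variable (ξ : ExtCat C)

lemma k0_add (A B : C) : k0clsE C ξ (A ⊞ B) = k0clsE C ξ A + k0clsE C ξ B := by
  simp only [k0clsE, clsZero_add, map_add]

lemma k0_iso {A B : C} (e : Nonempty (A ≅ B)) : k0clsE C ξ A = k0clsE C ξ B := by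
  simp only [k0clsE, clsZero_iso e]

lemma k0_zero : k0clsE C ξ (0 : C) = 0 := by
  simp only [k0clsE, clsZero_zero, map_zero]

lemma k0_confl {A B Cc : C} {f : A ⟶ B} {g : B ⟶ Cc} {δ : ξ.Ext Cc A}
    (h : ξ.real f g δ) : k0clsE C ξ A + k0clsE C ξ Cc = k0clsE C ξ B := by
  rw [← sub_eq_zero]
  show psiExt C ξ (clsZero C A) + psiExt C ξ (clsZero C Cc) - psiExt C ξ (clsZero C B) = 0
  rw [← map_add, ← map_sub]
  exact (QuotientAddGroup.eq_zero_iff _).mpr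
    (AddSubgroup.subset_closure ⟨A, B, Cc, f, g, δ, h, rfl⟩)

lemma k0_diff (x : K0Ext C ξ) : ∃ A B : C, x = k0clsE C ξ A - k0clsE C ξ B := by
  obtain ⟨y, rfl⟩ := QuotientAddGroup.mk'_surjective _ x
  obtain ⟨z, rfl⟩ := QuotientAddGroup.mk'_surjective _ y
  refine FreeAbelianGroup.induction_on z ?_ ?_ ?_ ?_
  · exact ⟨0, 0, by simp⟩
  · intro A
    refine ⟨A, 0, ?_⟩
    rw [k0_zero ξ, sub_zero]
    rfl
  · intro A _
    refine ⟨0, A, ?_⟩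
    rw [k0_zero ξ, zero_sub, map_neg, map_neg]
    rfl
  · rintro x y ⟨A, B, hx⟩ ⟨A', B', hy⟩
    refine ⟨A ⊞ A', B ⊞ B', ?_⟩
    rw [map_add, map_add, hx, hy, k0_add ξ, k0_add ξ]
    abel

lemma summand_of_cocone {X : Set C} (hCo : CoconeClosed ξ X) :
    ∀ A P : C, P ∈ X → (A ⊞ P) ∈ X → A ∈ X := fun A P hP hAP =>
  hCo (biprod.inl : A ⟶ A ⊞ P) biprod.snd 0 (ξ.real_zero A P) hAP hP

lemma summand_of_cone {X : Set C} (hAdd : AddSub C X) (hC : ConeClosed ξ X) :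
    ∀ A P : C, P ∈ X → (A ⊞ P) ∈ X → A ∈ X := fun A P hP hAP =>
  hC (biprod.inl : P ⟶ P ⊞ A) biprod.snd 0 (ξ.real_zero P A) hP
    (hAdd.2.2 hAP ⟨biprod.braiding A P⟩)

/-- The key Thomason-type lemma: if `[A]` lies in the subgroup generated by the classes of a
dense additive extension-closed subcategory which is closed under the relevant summands,
then `A ∈ X`. -/
lemma mem_of_cls_mem {X : Set C} (hAdd : AddSub C X) (hD : DenseSub X)
    (hExt : ExtClosed ξ X) (hSummand : ∀ A P : C, P ∈ X → (A ⊞ P) ∈ X → A ∈ X)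
    {A : C} (hA : k0clsE C ξ A ∈ AddSubgroup.closure (k0clsE C ξ '' X)) : A ∈ X := by
  letI : AddCommGroup (MQ X) := MQgroup hAdd hD
  set φ₀ : FreeAbelianGroup C →+ MQ X :=
    FreeAbelianGroup.lift (fun B => Quot.mk (rX X) B) with hφ₀
  have hmk : ∀ B : C, φ₀ (FreeAbelianGroup.of B) = Quot.mk (rX X) B := fun B =>
    FreeAbelianGroup.lift_apply_of _ _
  have hadd : ∀ B B' : C,
      (Quot.mk (rX X) B : MQ X) + Quot.mk (rX X) B' = Quot.mk (rX X) (B ⊞ B') := fun _ _ => rfl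
  have h₁ : AddSubgroup.closure (relAdd C) ≤ φ₀.ker := by
    rw [AddSubgroup.closure_le]
    rintro x (⟨B, B', rfl⟩ | ⟨B, B', e, rfl⟩) <;> rw [SetLike.mem_coe, AddMonoidHom.mem_ker]
    · rw [map_sub, map_add, hmk, hmk, hmk, hadd, sub_self]
    · rw [map_sub, hmk, hmk, sub_eq_zero]
      exact Quot.sound (rX_of_iso hAdd e)
  set φ₁ : K0Zero C →+ MQ X := QuotientAddGroup.lift _ φ₀ h₁ with hφ₁
  have hmk₁ : ∀ B : C, φ₁ (clsZero C B) = Quot.mk (rX X) B := fun B => hmk B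
  have h₂ : AddSubgroup.closure (conflRel C ξ) ≤ φ₁.ker := by
    rw [AddSubgroup.closure_le]
    rintro x ⟨A', B', Cc', f, g, δ, hreal, rfl⟩
    rw [SetLike.mem_coe, AddMonoidHom.mem_ker, map_sub, map_add, hmk₁, hmk₁, hmk₁, hadd,
      sub_eq_zero]
    apply Quot.sound
    -- `A' ⊞ Cc'` is stably isomorphic to `B'`
    set A'' := complObj hD A'
    set C'' := complObj hD Cc'
    have hmid : (B' ⊞ (A'' ⊞ C'')) ∈ X := by
      refine hExt (biprod.map f (biprod.inl : A'' ⟶ A'' ⊞ C''))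
        (biprod.map g (biprod.snd : A'' ⊞ C'' ⟶ C'')) _
        (ξ.real_sum hreal (ξ.real_zero A'' C'')) ?_ ?_
      · exact compl_mem hAdd hD A'
      · exact compl_mem hAdd hD Cc'
    refine ⟨B' ⊞ (A'' ⊞ C''), hmid,
      (A' ⊞ A'') ⊞ (Cc' ⊞ C''), hAdd.2.1 (compl_mem hAdd hD A') (compl_mem hAdd hD Cc'), ⟨?_⟩⟩
    calc (A' ⊞ Cc') ⊞ (B' ⊞ (A'' ⊞ C''))
        ≅ (B' ⊞ (A'' ⊞ C'')) ⊞ (A' ⊞ Cc') := biprod.braiding _ _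
      _ ≅ B' ⊞ ((A'' ⊞ C'') ⊞ (A' ⊞ Cc')) := bAssoc _ _ _
      _ ≅ B' ⊞ ((A'' ⊞ A') ⊞ (C'' ⊞ Cc')) :=
          biprod.mapIso (Iso.refl _) (shuffle4 _ _ _ _)
      _ ≅ B' ⊞ ((A' ⊞ A'') ⊞ (Cc' ⊞ C'')) :=
          biprod.mapIso (Iso.refl _)
            (biprod.mapIso (biprod.braiding _ _) (biprod.braiding _ _))
  set φ₂ : K0Ext C ξ →+ MQ X := QuotientAddGroup.lift _ φ₁ h₂ with hφ₂
  have hmk₂ : ∀ B : C, φ₂ (k0clsE C ξ B) = Quot.mk (rX X) B := fun B => hmk B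
  have hker : AddSubgroup.closure (k0clsE C ξ '' X) ≤ φ₂.ker := by
    rw [AddSubgroup.closure_le]
    rintro x ⟨P, hP, rfl⟩
    rw [SetLike.mem_coe, AddMonoidHom.mem_ker, hmk₂]
    exact Quot.sound (rX_zero_of_mem hAdd hP)
  have h0 : φ₂ (k0clsE C ξ A) = 0 := hker hA
  rw [hmk₂] at h0
  have hAr : rX X A 0 := by
    have := (Quot.eq.mp h0)
    exact ((rX_equivalence hAdd).eqvGen_iff).mp this
  obtain ⟨P, hP, Q, hQ, ⟨e⟩⟩ := hAr
  have : (A ⊞ P) ∈ X := hAdd.2.2 (hAdd.2.1 hAdd.1 hQ) ⟨e.symm⟩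
  exact hSummand A P hP this

lemma gen_split {G : Set C} (hG : IsGenerator ξ G ∨ IsCogenerator ξ G) (A : C) :
    ∃ G₀ ∈ G, ∃ A₁ : C, k0clsE C ξ A + k0clsE C ξ A₁ = k0clsE C ξ G₀ := by
  rcases hG with hG | hG
  · obtain ⟨G₀, hG₀, A₁, f, g, δ, hreal⟩ := hG A
    exact ⟨G₀, hG₀, A₁, by rw [add_comm]; exact k0_confl ξ hreal⟩
  · obtain ⟨G₀, hG₀, A₁, f, g, δ, hreal⟩ := hG A
    exact ⟨G₀, hG₀, A₁, k0_confl ξ hreal⟩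

lemma part2' {X : Set C} (hD : DenseSub X) (hAdd : AddSub C X) (hExt : ExtClosed ξ X)
    (hSummand : ∀ A P : C, P ∈ X → (A ⊞ P) ∈ X → A ∈ X) :
    {A : C | k0clsE C ξ A ∈ AddSubgroup.closure (k0clsE C ξ '' X)} = X := by
  ext A
  constructor
  · exact fun hA => mem_of_cls_mem ξ hAdd hD hExt hSummand hA
  · exact fun hA => AddSubgroup.subset_closure ⟨A, hA, rfl⟩

lemma part3' {G : Set C} (hG : IsGenerator ξ G ∨ IsCogenerator ξ G)
    (H : AddSubgroup (K0Ext C ξ)) (hGH : ∀ G₀ ∈ G, k0clsE C ξ G₀ ∈ H) :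
    DenseSub {A : C | k0clsE C ξ A ∈ H} ∧ GResolving ξ G {A : C | k0clsE C ξ A ∈ H} ∧
      AddSubgroup.closure (k0clsE C ξ '' {A : C | k0clsE C ξ A ∈ H}) = H := by
  have hAdd : AddSub C {A : C | k0clsE C ξ A ∈ H} := by
    refine ⟨?_, ?_, ?_⟩
    · show k0clsE C ξ (0 : C) ∈ H
      rw [k0_zero ξ]; exact H.zero_mem
    · intro A B hA hB
      show k0clsE C ξ (A ⊞ B) ∈ H
      rw [k0_add ξ]; exact H.add_mem hA hB
    · intro A B hA e
      show k0clsE C ξ B ∈ H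
      rw [← k0_iso ξ e]; exact hA
  have hExt : ExtClosed ξ {A : C | k0clsE C ξ A ∈ H} := by
    intro A B Cc f g δ hreal hA hC
    show k0clsE C ξ B ∈ H
    rw [← k0_confl ξ hreal]; exact H.add_mem hA hC
  have hCocone : CoconeClosed ξ {A : C | k0clsE C ξ A ∈ H} := by
    intro A B Cc f g δ hreal hB hC
    show k0clsE C ξ A ∈ H
    rw [show k0clsE C ξ A = k0clsE C ξ B - k0clsE C ξ Cc from
      eq_sub_of_add_eq (k0_confl ξ hreal)]
    exact H.sub_mem hB hC
  have hDense : DenseSub {A : C | k0clsE C ξ A ∈ H} := by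
    intro A
    obtain ⟨G₀, hG₀, A₁, hsum⟩ := gen_split ξ hG A
    refine ⟨A ⊞ A₁, ?_, A₁, ⟨Iso.refl _⟩⟩
    show k0clsE C ξ (A ⊞ A₁) ∈ H
    rw [k0_add ξ, hsum]
    exact hGH G₀ hG₀
  refine ⟨hDense, ⟨hAdd, hExt, hCocone, fun G₀ hG₀ => hGH G₀ hG₀⟩, ?_⟩
  refine le_antisymm ?_ ?_
  · rw [AddSubgroup.closure_le]
    rintro x ⟨P, hP, rfl⟩
    exact hP
  · intro x hx
    obtain ⟨A, B, rfl⟩ := k0_diff ξ x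
    obtain ⟨G₀, hG₀, B₁, hsum⟩ := gen_split ξ hG B
    have hG₀H : k0clsE C ξ G₀ ∈ H := hGH G₀ hG₀
    have hAB₁ : k0clsE C ξ (A ⊞ B₁) ∈ H := by
      rw [k0_add ξ, show k0clsE C ξ A + k0clsE C ξ B₁ =
        (k0clsE C ξ A - k0clsE C ξ B) + k0clsE C ξ G₀ by rw [← hsum]; abel]
      exact H.add_mem hx hG₀H
    have heq : k0clsE C ξ A - k0clsE C ξ B =
        k0clsE C ξ (A ⊞ B₁) - k0clsE C ξ G₀ := by
      rw [k0_add ξ, ← hsum]; abel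
    rw [heq]
    exact AddSubgroup.sub_mem _ (AddSubgroup.subset_closure ⟨A ⊞ B₁, hAB₁, rfl⟩)
      (AddSubgroup.subset_closure ⟨G₀, hG₀H, rfl⟩)

end AuxProof

theorem stmt14 (C : Type u) [Category.{v} C] [Preadditive C] [HasFiniteBiproducts C]
    [EssentiallySmall.{w} C] (ξ : ExtCat C) (G : Set C)
    (hG : IsGenerator ξ G ∨ IsCogenerator ξ G) :
    ({X : Set C | DenseSub X ∧ GResolving ξ G X} =
      {X : Set C | DenseSub X ∧ GCoresolving ξ G X}) ∧
    (∀ X : Set C, DenseSub X → GResolving ξ G X →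
        {A : C | k0clsE C ξ A ∈ AddSubgroup.closure (k0clsE C ξ '' X)} = X) ∧
    (∀ H : AddSubgroup (K0Ext C ξ), (∀ G₀ ∈ G, k0clsE C ξ G₀ ∈ H) →
        DenseSub {A : C | k0clsE C ξ A ∈ H} ∧ GResolving ξ G {A : C | k0clsE C ξ A ∈ H} ∧
          AddSubgroup.closure (k0clsE C ξ '' {A : C | k0clsE C ξ A ∈ H}) = H) := by
  refine ⟨?_, ?_, ?_⟩
  · ext X
    simp only [Set.mem_setOf_eq]
    constructor
    · rintro ⟨hD, hAdd, hExt, hCoc, hGX⟩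
      refine ⟨hD, hAdd, hExt, ?_, hGX⟩
      have hXeq := part2' ξ hD hAdd hExt (summand_of_cocone ξ hCoc)
      intro A B Cc f g δ hreal hA hB
      rw [← hXeq]
      show k0clsE C ξ Cc ∈ AddSubgroup.closure (k0clsE C ξ '' X)
      rw [show k0clsE C ξ Cc = k0clsE C ξ B - k0clsE C ξ A from
        eq_sub_of_add_eq (by rw [add_comm]; exact k0_confl ξ hreal)]
      exact AddSubgroup.sub_mem _ (AddSubgroup.subset_closure ⟨B, hB, rfl⟩)
        (AddSubgroup.subset_closure ⟨A, hA, rfl⟩)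
    · rintro ⟨hD, hAdd, hExt, hCone, hGX⟩
      refine ⟨hD, hAdd, hExt, ?_, hGX⟩
      have hXeq := part2' ξ hD hAdd hExt (summand_of_cone ξ hAdd hCone)
      intro A B Cc f g δ hreal hB hC
      rw [← hXeq]
      show k0clsE C ξ A ∈ AddSubgroup.closure (k0clsE C ξ '' X)
      rw [eq_sub_of_add_eq (k0_confl ξ hreal)]
      exact AddSubgroup.sub_mem _ (AddSubgroup.subset_closure ⟨B, hB, rfl⟩)
        (AddSubgroup.subset_closure ⟨Cc, hC, rfl⟩)
  · intro X hD hRes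
    exact part2' ξ hD hRes.1 hRes.2.1 (summand_of_cocone ξ hRes.2.2.1)
  · intro H hGH
    exact part3' ξ hG H hGH
end
end
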